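/- Fix distinct primes p₁, p₃, p₄ and let K₂ be the class of torsion-free abelian groups satisfying conditions (a) and (b) as below. Let (G_i)_{i<δ} be an increasing chain of subgroups of a torsion-free abelian group, indexed by a linear order (or ordinal δ), such that each G_i is pure in G_δ := ⋃_{i<δ} G_i and each G_i ∈ K₂. Then G_δ ∈ K₂. -/
import Mathlib


/-- `g` is divisible by all powers of `p` inside the group `G`. -/
def DivSet (p : ℕ) (G : Type*) [AddCommGroup G] : Set G :=
  {g | ∀ n : ℕ, ∃ y : G, p ^ n • y = g}

/-- `p^ω H`, computed inside the subgroup `H` of `G`. -/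
def DivIn {G : Type*} [AddCommGroup G] (p : ℕ) (H : AddSubgroup G) : Set G :=
  {g | g ∈ H ∧ ∀ n : ℕ, ∃ y ∈ H, p ^ n • y = g}

/-- `H` is a pure subgroup of `G`: `nH = H ∩ nG` for all integers `n`. -/
def IsPure {G : Type*} [AddCommGroup G] (H : AddSubgroup G) : Prop :=
  ∀ (n : ℤ) (x : G), x ∈ H → (∃ g : G, n • g = x) → ∃ y ∈ H, n • y = x

/-- Condition K₁: `G = p₁^ω G` and `p^ω G = 0` for all primes `p ≠ p₁`. -/
def K1 (p1 : ℕ) (G : Type*) [AddCommGroup G] : Prop :=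
  (∀ g : G, g ∈ DivSet p1 G) ∧
  (∀ p : ℕ, p.Prime → p ≠ p1 → DivSet p G = {0})

/-- Conditions K₂(a) and K₂(b). -/
def K2 (p1 p3 p4 : ℕ) (G : Type*) [AddCommGroup G] : Prop :=
  (∀ g ∈ DivSet p1 G, ∀ z1 ∈ DivSet p3 G, ∀ z2 ∈ DivSet p3 G,
      g + z1 ∈ DivSet p4 G → g + z2 ∈ DivSet p4 G → z1 = z2) ∧
  (∀ g ∈ DivSet p1 G, ∃ k : ℕ, 0 < k ∧ ∃ z ∈ DivSet p3 G, k • g + z ∈ DivSet p4 G)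

/-- Conditions K₂(a) and K₂(b), relativized to a subgroup `H` of `G`. -/
def K2In (p1 p3 p4 : ℕ) {G : Type*} [AddCommGroup G] (H : AddSubgroup G) : Prop :=
  (∀ g ∈ DivIn p1 H, ∀ z1 ∈ DivIn p3 H, ∀ z2 ∈ DivIn p3 H,
      g + z1 ∈ DivIn p4 H → g + z2 ∈ DivIn p4 H → z1 = z2) ∧
  (∀ g ∈ DivIn p1 H, ∃ k : ℕ, 0 < k ∧ ∃ z ∈ DivIn p3 H, k • g + z ∈ DivIn p4 H)


lemma pure_div {G : Type*} [AddCommGroup G] {H : AddSubgroup G} (hp : IsPure H)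
    {p : ℕ} {g : G} (hg : g ∈ H) (hd : g ∈ DivSet p G) :
    (⟨g, hg⟩ : H) ∈ DivSet p H := by
  intro n
  obtain ⟨y, hy⟩ := hd n
  obtain ⟨w, hwH, hw⟩ := hp ((p : ℤ) ^ n) g hg
    ⟨y, by rw [← hy, ← Nat.cast_pow, natCast_zsmul]⟩
  rw [← Nat.cast_pow, natCast_zsmul] at hw
  exact ⟨⟨w, hwH⟩, Subtype.ext (by simpa using hw)⟩

lemma subgroup_div_lift {G : Type*} [AddCommGroup G] {H : AddSubgroup G}
    {p : ℕ} {h : H} (hd : h ∈ DivSet p H) : (h : G) ∈ DivSet p G := by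
  intro n
  obtain ⟨y, hy⟩ := hd n
  exact ⟨(y : G), by exact_mod_cast congrArg (Subtype.val) hy⟩

theorem stmt10 {G : Type*} [AddCommGroup G] [NoZeroSMulDivisors ℤ G]
    (p1 p3 p4 : ℕ) (hp1 : p1.Prime) (hp3 : p3.Prime) (hp4 : p4.Prime)
    (h13 : p1 ≠ p3) (h14 : p1 ≠ p4) (h34 : p3 ≠ p4)
    {δ : Type*} [LinearOrder δ]
    (Gi : δ → AddSubgroup G) (hmono : Monotone Gi)
    (hunion : ∀ g : G, ∃ i, g ∈ Gi i)
    (hpure : ∀ i, IsPure (Gi i))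
    (hK2 : ∀ i, K2 p1 p3 p4 ↥(Gi i)) :
    K2 p1 p3 p4 G := by
  constructor
  · intro g hg z1 hz1 z2 hz2 h1 h2
    obtain ⟨i, hi⟩ := hunion g
    obtain ⟨j, hj⟩ := hunion z1
    obtain ⟨k, hk⟩ := hunion z2
    set m := max i (max j k) with hm
    have hgm : g ∈ Gi m := hmono (le_max_left _ _) hi
    have hz1m : z1 ∈ Gi m := hmono (le_trans (le_max_left _ _) (le_max_right _ _)) hj
    have hz2m : z2 ∈ Gi m := hmono (le_trans (le_max_right _ _) (le_max_right _ _)) hk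
    have := (hK2 m).1 ⟨g, hgm⟩ (pure_div (hpure m) hgm hg)
      ⟨z1, hz1m⟩ (pure_div (hpure m) hz1m hz1)
      ⟨z2, hz2m⟩ (pure_div (hpure m) hz2m hz2)
      (pure_div (hpure m) (AddSubgroup.add_mem _ hgm hz1m) h1)
      (pure_div (hpure m) (AddSubgroup.add_mem _ hgm hz2m) h2)
    exact congrArg Subtype.val this
  · intro g hg
    obtain ⟨i, hi⟩ := hunion g
    obtain ⟨k, hk, z, hz, hkz⟩ := (hK2 i).2 ⟨g, hi⟩ (pure_div (hpure i) hi hg)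
    exact ⟨k, hk, (z : G), subgroup_div_lift hz, by exact_mod_cast subgroup_div_lift hkz⟩
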